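/- Let N > 2 and let s_0, …, s_{N−1} be unit vectors in ℝ³ that globally minimize the energy E(S) = Σ_{μ=0}^{N−1} α_μ (s_μ · s_{μ+1}) (indices mod N) for nonzero real couplings α_0, …, α_{N−1}. Then all the vectors s_0, …, s_{N−1} lie in a common two-dimensional linear subspace of ℝ³; in particular the lowest energy configuration is either collinear (all s_μ lie on one line through the origin) or coplanar. -/

import Mathlib

open scoped RealInnerProductSpace

/-- The lowest energy configuration of a classical spin polygon is either collinear
or coplanar: all spin vectors lie in a common two-dimensional subspace of ℝ³. -/
theorem lec_coplanar (N : ℕ) [NeZero N] (hN : 2 < N)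
    (α : ZMod N → ℝ) (hα : ∀ μ, α μ ≠ 0)
    (s : ZMod N → EuclideanSpace ℝ (Fin 3)) (hs : ∀ μ, ‖s μ‖ = 1)
    (hmin : ∀ t : ZMod N → EuclideanSpace ℝ (Fin 3), (∀ μ, ‖t μ‖ = 1) →
      ∑ μ : ZMod N, α μ * ⟪s μ, s (μ + 1)⟫ ≤ ∑ μ : ZMod N, α μ * ⟪t μ, t (μ + 1)⟫) :
    ∃ P : Submodule ℝ (EuclideanSpace ℝ (Fin 3)),
      Module.finrank ℝ P = 2 ∧ ∀ μ, s μ ∈ P := by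
  haveI : Fact (1 < N) := ⟨by omega⟩
  have hone : (1 : ZMod N) ≠ 0 := one_ne_zero
  have htwo : (2 : ZMod N) ≠ 0 := by
    have : ((2 : ℕ) : ZMod N) ≠ 0 := by
      rw [Ne, ZMod.natCast_eq_zero_iff]
      intro h
      have := Nat.le_of_dvd (by norm_num) h
      omega
    simpa using this
  -- Variational inequality: each spin minimizes its local field energy.
  have key : ∀ (μ₀ : ZMod N) (v : EuclideanSpace ℝ (Fin 3)), ‖v‖ = 1 →
      ⟪α (μ₀ - 1) • s (μ₀ - 1) + α μ₀ • s (μ₀ + 1), s μ₀⟫ ≤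
      ⟪α (μ₀ - 1) • s (μ₀ - 1) + α μ₀ • s (μ₀ + 1), v⟫ := by
    intro μ₀ v hv
    set t : ZMod N → EuclideanSpace ℝ (Fin 3) := Function.update s μ₀ v with ht
    have htnorm : ∀ μ, ‖t μ‖ = 1 := by
      intro μ
      by_cases h : μ = μ₀
      · subst h; simp [ht, hv]
      · simp [ht, Function.update_of_ne h, hs]
    have hsum := hmin t htnorm
    have hne1 : μ₀ - 1 ≠ μ₀ := fun h => hone (by rwa [sub_eq_self] at h)
    have hne2 : μ₀ + 1 ≠ μ₀ := fun h => hone (by rwa [add_eq_left] at h)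
    have hne3 : μ₀ - 1 ≠ μ₀ - 1 + 1 → True := fun _ => trivial
    -- the difference of energies
    have hdiff : ∑ μ : ZMod N, α μ * ⟪t μ, t (μ + 1)⟫ - ∑ μ : ZMod N, α μ * ⟪s μ, s (μ + 1)⟫
        = (α (μ₀ - 1) * ⟪s (μ₀ - 1), v⟫ + α μ₀ * ⟪v, s (μ₀ + 1)⟫)
          - (α (μ₀ - 1) * ⟪s (μ₀ - 1), s μ₀⟫ + α μ₀ * ⟪s μ₀, s (μ₀ + 1)⟫) := by
      rw [← Finset.sum_sub_distrib]
      have hsub : ∑ μ : ZMod N, (α μ * ⟪t μ, t (μ + 1)⟫ - α μ * ⟪s μ, s (μ + 1)⟫)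
          = ∑ μ ∈ ({μ₀ - 1, μ₀} : Finset (ZMod N)),
              (α μ * ⟪t μ, t (μ + 1)⟫ - α μ * ⟪s μ, s (μ + 1)⟫) := by
        refine (Finset.sum_subset (Finset.subset_univ _) ?_).symm
        intro μ _ hμ
        simp only [Finset.mem_insert, Finset.mem_singleton, not_or] at hμ
        obtain ⟨h1, h2⟩ := hμ
        have ht1 : t μ = s μ := Function.update_of_ne h2 _ _
        have ht2 : t (μ + 1) = s (μ + 1) := by
          refine Function.update_of_ne ?_ _ _
          intro h; apply h1; rw [← h]; ring
        rw [ht1, ht2, sub_self]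
      rw [hsub, Finset.sum_pair hne1]
      have e1 : t (μ₀ - 1) = s (μ₀ - 1) := Function.update_of_ne hne1 _ _
      have e2 : t (μ₀ - 1 + 1) = v := by rw [sub_add_cancel]; exact Function.update_self _ _ _
      have e3 : t μ₀ = v := Function.update_self _ _ _
      have e4 : t (μ₀ + 1) = s (μ₀ + 1) := Function.update_of_ne hne2 _ _
      rw [e1, e2, e3, e4, sub_add_cancel]
      ring
    have hle : (0 : ℝ) ≤ (α (μ₀ - 1) * ⟪s (μ₀ - 1), v⟫ + α μ₀ * ⟪v, s (μ₀ + 1)⟫)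
          - (α (μ₀ - 1) * ⟪s (μ₀ - 1), s μ₀⟫ + α μ₀ * ⟪s μ₀, s (μ₀ + 1)⟫) := by
      rw [← hdiff]; linarith
    have expand : ∀ w : EuclideanSpace ℝ (Fin 3),
        ⟪α (μ₀ - 1) • s (μ₀ - 1) + α μ₀ • s (μ₀ + 1), w⟫
        = α (μ₀ - 1) * ⟪s (μ₀ - 1), w⟫ + α μ₀ * ⟪s (μ₀ + 1), w⟫ := by
      intro w
      rw [inner_add_left, real_inner_smul_left, real_inner_smul_left]
    rw [expand, expand]
    rw [real_inner_comm (s (μ₀ + 1)) v, real_inner_comm (s (μ₀ + 1)) (s μ₀)] at *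
    linarith
  -- Each spin is antiparallel to its local field.
  have heq : ∀ μ₀ : ZMod N, α (μ₀ - 1) • s (μ₀ - 1) + α μ₀ • s (μ₀ + 1)
      = -(‖α (μ₀ - 1) • s (μ₀ - 1) + α μ₀ • s (μ₀ + 1)‖ • s μ₀) := by
    intro μ₀
    set h : EuclideanSpace ℝ (Fin 3) := α (μ₀ - 1) • s (μ₀ - 1) + α μ₀ • s (μ₀ + 1) with hh
    by_cases h0 : h = 0
    · rw [h0]; simp
    · have hnorm : ‖h‖ ≠ 0 := norm_ne_zero_iff.mpr h0
      have hv : ‖-(‖h‖⁻¹ • h)‖ = 1 := by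
        rw [norm_neg, norm_smul]
        simp [abs_of_nonneg (inv_nonneg.mpr (norm_nonneg h)), inv_mul_cancel₀ hnorm]
      have hkey := key μ₀ (-(‖h‖⁻¹ • h)) hv
      have hinner : ⟪h, -(‖h‖⁻¹ • h)⟫ = -‖h‖ := by
        rw [inner_neg_right, real_inner_smul_right, real_inner_self_eq_norm_sq]
        field_simp
      rw [hinner] at hkey
      have hcs : -‖h‖ ≤ ⟪h, s μ₀⟫ := by
        have := abs_real_inner_le_norm h (s μ₀)
        rw [hs μ₀, mul_one] at this
        have := abs_le.mp this
        linarith [this.1]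
      have heq' : ⟪h, s μ₀⟫ = -‖h‖ := le_antisymm hkey hcs
      have : ⟪-h, s μ₀⟫ = ‖-h‖ * ‖s μ₀‖ := by
        rw [inner_neg_left, heq', norm_neg, hs μ₀, mul_one, neg_neg]
      have := inner_eq_norm_mul_iff_real.mp this
      rw [hs μ₀, one_smul, norm_neg] at this
      rw [← this, neg_neg]
  -- Membership propagation.
  have step : ∀ (μ₀ : ZMod N) (P : Submodule ℝ (EuclideanSpace ℝ (Fin 3))),
      s (μ₀ - 1) ∈ P → s μ₀ ∈ P → s (μ₀ + 1) ∈ P := by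
    intro μ₀ P h1 h2
    have e := heq μ₀
    have : α μ₀ • s (μ₀ + 1)
        = -(‖α (μ₀ - 1) • s (μ₀ - 1) + α μ₀ • s (μ₀ + 1)‖ • s μ₀) - α (μ₀ - 1) • s (μ₀ - 1) := by
      rw [← e]; abel
    have hmem : α μ₀ • s (μ₀ + 1) ∈ P := by
      rw [this]
      exact P.sub_mem (P.neg_mem (P.smul_mem _ h2)) (P.smul_mem _ h1)
    have : s (μ₀ + 1) = (α μ₀)⁻¹ • (α μ₀ • s (μ₀ + 1)) := by
      rw [inv_smul_smul₀ (hα μ₀)]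
    rw [this]
    exact P.smul_mem _ hmem
  -- All spins lie in span {s 0, s 1}.
  set P₀ : Submodule ℝ (EuclideanSpace ℝ (Fin 3)) := Submodule.span ℝ {s 0, s 1} with hP₀
  have h0mem : s 0 ∈ P₀ := Submodule.subset_span (Set.mem_insert _ _)
  have h1mem : s 1 ∈ P₀ := Submodule.subset_span (Set.mem_insert_of_mem _ rfl)
  have hall : ∀ n : ℕ, s (n : ZMod N) ∈ P₀ ∧ s ((n : ZMod N) + 1) ∈ P₀ := by
    intro n
    induction n with
    | zero => simpa using ⟨h0mem, h1mem⟩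
    | succ n ih =>
      refine ⟨by push_cast; exact ih.2, ?_⟩
      have := step ((n : ZMod N) + 1) P₀ (by simpa using ih.1) ih.2
      push_cast
      exact this
  have hallmem : ∀ μ : ZMod N, s μ ∈ P₀ := by
    intro μ
    have : ((μ.val : ℕ) : ZMod N) = μ := ZMod.natCast_rightInverse μ
    rw [← this]
    exact (hall μ.val).1
  -- extend to an exactly two-dimensional subspace
  have hs0ne : s 0 ≠ 0 := by
    intro h; have := hs 0; rw [h, norm_zero] at this; norm_num at this
  have hdim : Module.finrank ℝ (EuclideanSpace ℝ (Fin 3)) = 3 := by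
    simp [finrank_euclideanSpace_fin]
  by_cases hLI : LinearIndependent ℝ ![s 0, s 1]
  · refine ⟨P₀, ?_, hallmem⟩
    have := finrank_span_eq_card hLI
    rw [show Set.range ![s 0, s 1] = {s 0, s 1} by
      simp [Matrix.range_cons, Matrix.range_empty, Set.pair_comm]] at this
    simpa [hP₀] using this
  · -- s 1 is a multiple of s 0
    have hdep : ∃ a : ℝ, s 1 = a • s 0 := by
      rw [LinearIndependent.pair_iff] at hLI
      push_neg at hLI
      obtain ⟨a, b, hab, hne⟩ := hLI
      have hb : b ≠ 0 := by
        intro hb0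
        have ha : a = 0 := by
          have h' : a • s 0 = 0 := by simpa [hb0] using hab
          rcases smul_eq_zero.mp h' with h | h
          · exact h
          · exact absurd h hs0ne
        exact hne ha hb0
      refine ⟨-(b⁻¹ * a), ?_⟩
      have hb1 : b • s 1 = -(a • s 0) := by
        rw [eq_neg_iff_add_eq_zero, add_comm]; exact hab
      have hb2 := congrArg (fun x => b⁻¹ • x) hb1
      simp only [smul_smul, inv_mul_cancel₀ hb, one_smul, smul_neg] at hb2
      rw [hb2, neg_smul]
    obtain ⟨y, hy⟩ := exists_linearIndependent_pair_of_one_lt_finrank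
      (by rw [hdim]; norm_num) hs0ne
    refine ⟨Submodule.span ℝ {s 0, y}, ?_, ?_⟩
    · have := finrank_span_eq_card hy
      rw [show Set.range ![s 0, y] = {s 0, y} by
        simp [Matrix.range_cons, Matrix.range_empty, Set.pair_comm]] at this
      simpa using this
    · intro μ
      have hsub : P₀ ≤ Submodule.span ℝ {s 0, y} := by
        rw [hP₀, Submodule.span_le]
        intro x hx
        rcases hx with h | h
        · rw [h]; exact Submodule.subset_span (Set.mem_insert _ _)
        · rw [Set.mem_singleton_iff] at h
          obtain ⟨a, ha⟩ := hdep
          rw [h, ha]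
          exact Submodule.smul_mem _ _ (Submodule.subset_span (Set.mem_insert _ _))
      exact hsub (hallmem μ)
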